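/- Let C be a prevariety over a finite alphabet A and let α : A* → M be an SF(C)-morphism. Then there exists a C-morphism η : A* → N such that for every word u ∈ A*: if η(u) is idempotent in N, then there is n ≥ 1 with α(u)^{n+1} = α(u)ⁿ (equivalently, (α(u))^{ω+1} = (α(u))^{ω}, where ω is an exponent such that s^{ω} is idempotent for every s ∈ M). -/
import Mathlib


open Pointwise

namespace StarFreePaper

variable {A : Type}

/-- Languages over the alphabet `A`: sets of words, i.e. elements of the free monoid. -/
abbrev Lang (A : Type) : Type := Set (FreeMonoid A)

/-- Concatenation of languages. -/
def Lcat (K L : Lang A) : Lang A := {w | ∃ u ∈ K, ∃ v ∈ L, w = u * v}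

/-- Kleene star of a language. -/
def Lstar (K : Lang A) : Lang A :=
  {w | ∃ l : List (FreeMonoid A), (∀ u ∈ l, u ∈ K) ∧ w = l.prod}

/-- `K⁺`: nonempty products of words of `K`. -/
def Lplus (K : Lang A) : Lang A :=
  {w | ∃ l : List (FreeMonoid A), l ≠ [] ∧ (∀ u ∈ l, u ∈ K) ∧ w = l.prod}

/-- `K^d`: products of exactly `d` words of `K`. -/
def Lpow (K : Lang A) (d : ℕ) : Lang A :=
  {w | ∃ l : List (FreeMonoid A), l.length = d ∧ (∀ u ∈ l, u ∈ K) ∧ w = l.prod}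

/-- Left quotient `u⁻¹L`. -/
def LeftQuot (u : FreeMonoid A) (L : Lang A) : Lang A := {w | u * w ∈ L}

/-- Right quotient `Lu⁻¹`. -/
def RightQuot (u : FreeMonoid A) (L : Lang A) : Lang A := {w | w * u ∈ L}

/-- A bundled morphism from the free monoid over `A` into a finite monoid. -/
structure FinMonRec (A : Type) : Type 1 where
  M : Type
  [mon : Monoid M]
  [fin : Finite M]
  φ : FreeMonoid A →* M

attribute [instance] FinMonRec.mon FinMonRec.fin

/-- A bundled morphism from the free monoid over `A` into a finite group. -/
structure FinGrpRec (A : Type) : Type 1 where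
  G : Type
  [grp : Group G]
  [fin : Finite G]
  φ : FreeMonoid A →* G

attribute [instance] FinGrpRec.grp FinGrpRec.fin

/-- A morphism recognizes `L` when `L` is the preimage of some subset. -/
def Recognizes {M : Type} [Monoid M] (φ : FreeMonoid A →* M) (L : Lang A) : Prop :=
  ∃ F : Set M, L = φ ⁻¹' F

/-- A language is regular when it is recognized by a morphism into a finite monoid. -/
def IsRegular (L : Lang A) : Prop := ∃ r : FinMonRec A, Recognizes r.φ L

/-- A language is a group language when it is recognized by a morphism into a finite group. -/
def IsGroupLang (L : Lang A) : Prop := ∃ r : FinGrpRec A, Recognizes r.φ L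

/-- Prevariety: class of regular languages containing `∅` and `A*`, closed under finite
union, finite intersection, complement and left/right quotients by words. -/
def IsPrevariety (C : Set (Lang A)) : Prop :=
  (∀ L ∈ C, IsRegular L) ∧ (∅ : Lang A) ∈ C ∧ (Set.univ : Lang A) ∈ C ∧
    (∀ K ∈ C, ∀ L ∈ C, K ∪ L ∈ C) ∧ (∀ K ∈ C, ∀ L ∈ C, K ∩ L ∈ C) ∧
    (∀ L ∈ C, Lᶜ ∈ C) ∧
    (∀ L ∈ C, ∀ u : FreeMonoid A, LeftQuot u L ∈ C) ∧
    (∀ L ∈ C, ∀ u : FreeMonoid A, RightQuot u L ∈ C)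

/-- A group prevariety: a prevariety consisting of group languages. -/
def IsGroupPrevariety (G : Set (Lang A)) : Prop :=
  IsPrevariety G ∧ ∀ L ∈ G, IsGroupLang L

/-- Lattice of languages: contains `∅`, `A*`, closed under finite unions/intersections. -/
def IsLatticeClass (C : Set (Lang A)) : Prop :=
  (∅ : Lang A) ∈ C ∧ (Set.univ : Lang A) ∈ C ∧
    (∀ K ∈ C, ∀ L ∈ C, K ∪ L ∈ C) ∧ (∀ K ∈ C, ∀ L ∈ C, K ∩ L ∈ C)

/-- Star-free closure of a class `C`: the least class containing `C` and the singletons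
`{a}` for letters `a`, closed under union, complement and concatenation. -/
inductive SF (C : Set (Lang A)) : Lang A → Prop
  | base {L : Lang A} : L ∈ C → SF C L
  | letter (a : A) : SF C {FreeMonoid.of a}
  | union {K L : Lang A} : SF C K → SF C L → SF C (K ∪ L)
  | compl {L : Lang A} : SF C L → SF C Lᶜ
  | cat {K L : Lang A} : SF C K → SF C L → SF C (Lcat K L)

/-- Prefix code: `ε ∉ K` and no word of `K` is a strict prefix of another word of `K`. -/
def IsPrefixCode (K : Lang A) : Prop :=
  (1 : FreeMonoid A) ∉ K ∧ ∀ u ∈ K, ∀ x : FreeMonoid A, x ≠ 1 → u * x ∉ K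

/-- `K` has synchronization delay `d`. -/
def HasSyncDelay (K : Lang A) (d : ℕ) : Prop :=
  ∀ u v w : FreeMonoid A, u * v * w ∈ Lplus K → v ∈ Lpow K d → u * v ∈ Lplus K

/-- Bounded synchronization delay. -/
def BoundedSyncDelay (K : Lang A) : Prop := ∃ d, 1 ≤ d ∧ HasSyncDelay K d

/-- Unambiguous concatenation. -/
def Unambiguous (K L : Lang A) : Prop :=
  ∀ u u' v v' : FreeMonoid A,
    u ∈ K → u' ∈ K → v ∈ L → v' ∈ L → u * v = u' * v' → u = u' ∧ v = v'

/-- `SD C`: least class containing `∅` and the singletons `{a}`, closed under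
intersection with languages of `C`, disjoint union, unambiguous concatenation, and
Kleene star applied to prefix codes of bounded synchronization delay. -/
inductive SD (C : Set (Lang A)) : Lang A → Prop
  | empty : SD C ∅
  | letter (a : A) : SD C {FreeMonoid.of a}
  | inter {K : Lang A} (L : Lang A) : SD C K → L ∈ C → SD C (K ∩ L)
  | dunion {K L : Lang A} : SD C K → SD C L → K ∩ L = ∅ → SD C (K ∪ L)
  | ucat {K L : Lang A} : SD C K → SD C L → Unambiguous K L → SD C (Lcat K L)
  | star {K : Lang A} : SD C K → IsPrefixCode K → BoundedSyncDelay K → SD C (Lstar K)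

/-- `K` separates `L₁` from `L₂`. -/
def Separates (K L₁ L₂ : Lang A) : Prop := L₁ ⊆ K ∧ K ∩ L₂ = ∅

/-- `L₁` is `C`-separable from `L₂`. -/
def Separable (C : Set (Lang A)) (L₁ L₂ : Lang A) : Prop := ∃ K ∈ C, Separates K L₁ L₂

/-- A `C`-morphism: a surjective morphism whose recognized languages all belong to `C`. -/
def IsCMorphism {M : Type} [Monoid M] (C : Set (Lang A)) (φ : FreeMonoid A →* M) : Prop :=
  Function.Surjective φ ∧ ∀ F : Set M, φ ⁻¹' F ∈ C

/-- `(s,t)` is a `C`-pair for `φ`. -/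
def CPair {M : Type} [Monoid M] (C : Set (Lang A)) (φ : FreeMonoid A →* M) (s t : M) : Prop :=
  ¬ Separable C (φ ⁻¹' {s}) (φ ⁻¹' {t})

/-- The `C`-orbit of an idempotent `e` for `φ`. -/
def COrbit {M : Type} [Monoid M] (C : Set (Lang A)) (φ : FreeMonoid A →* M) (e : M) :
    Set M :=
  {r | ∃ s : M, CPair C φ e s ∧ r = e * s * e}

/-- The `G`-kernel of `φ`. -/
def GKernel {M : Type} [Monoid M] (G : Set (Lang A)) (φ : FreeMonoid A →* M) : Set M :=
  {s | ¬ Separable G {(1 : FreeMonoid A)} (φ ⁻¹' {s})}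

/-- The syntactic congruence of a language `L`. -/
def SynCon (L : Lang A) : Con (FreeMonoid A) where
  r u v := ∀ x y : FreeMonoid A, x * u * y ∈ L ↔ x * v * y ∈ L
  iseqv :=
    ⟨fun _ _ _ => Iff.rfl, fun h x y => (h x y).symm, fun h h' x y => (h x y).trans (h' x y)⟩
  mul' := by
    intro u v u' v' h h' x y
    have h1 := h' (x * u) y
    have h2 := h x (v' * y)
    simp only [mul_assoc] at h1 h2 ⊢
    exact h1.trans h2

/-- The syntactic monoid of `L`. -/
abbrev SynMon (L : Lang A) : Type := (SynCon L).Quotient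

/-- The syntactic morphism of `L`. -/
def SynMorphism (L : Lang A) : FreeMonoid A →* SynMon L := (SynCon L).mk'

/-- A subset of a monoid is aperiodic when each of its elements `r` satisfies
`r ^ (n+1) = r ^ n` for some `n ≥ 1`. -/
def IsAperiodicSet {M : Type} [Monoid M] (S : Set M) : Prop :=
  ∀ r ∈ S, ∃ n, 1 ≤ n ∧ r ^ (n + 1) = r ^ n

/-- `Ks` is a (finite) cover of `L`. -/
def IsCoverOf (Ks : Set (Lang A)) (L : Lang A) : Prop := Ks.Finite ∧ L ⊆ ⋃₀ Ks

/-- `Ks` is separating for `Ls`. -/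
def SeparatingFor (Ks Ls : Set (Lang A)) : Prop := ∀ K ∈ Ks, ∃ L ∈ Ls, K ∩ L = ∅

/-- The pair `(L₁, Ls)` is `C`-coverable. -/
def Coverable (C : Set (Lang A)) (L₁ : Lang A) (Ls : Set (Lang A)) : Prop :=
  ∃ Ks : Set (Lang A), IsCoverOf Ks L₁ ∧ (∀ K ∈ Ks, K ∈ C) ∧ SeparatingFor Ks Ls

/-- Rating map into a commutative idempotent monoid `(R, +)`. -/
def IsRatingMap {R : Type} [AddCommMonoid R] (ρ : Lang A → R) : Prop :=
  ρ ∅ = 0 ∧ ∀ K L : Lang A, ρ (K ∪ L) = ρ K + ρ L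

/-- Multiplicative rating map (into an idempotent semiring). -/
def IsMultRM {R : Type} [Semiring R] (ρ : Lang A → R) : Prop :=
  IsRatingMap ρ ∧ ρ {(1 : FreeMonoid A)} = 1 ∧ ∀ K L : Lang A, ρ (Lcat K L) = ρ K * ρ L

/-- Nice rating map: every value is attained on a finite sublanguage. -/
def IsNiceRM {R : Type} [AddCommMonoid R] (ρ : Lang A → R) : Prop :=
  ∀ K : Lang A, ∃ F : Lang A, F.Finite ∧ F ⊆ K ∧ ρ K = ρ F

/-- Optimal `ρ`-imprint on `L` for `D` (intersection of imprints of all `D`-covers of `L`,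
using the canonical order `r ≤ s ↔ r + s = s`). -/
def optImprint {R : Type} [AddCommMonoid R] (D : Set (Lang A)) (L : Lang A)
    (ρ : Lang A → R) : Set R :=
  {r | ∀ Ks : Set (Lang A), Ks.Finite → (∀ K ∈ Ks, K ∈ D) → L ⊆ ⋃₀ Ks →
    ∃ K ∈ Ks, r + ρ K = ρ K}

/-- `η`-pointed optimal `ρ`-imprint for `D`. -/
def pointedOptImprint {N R : Type} [Monoid N] [AddCommMonoid R] (D : Set (Lang A))
    (η : FreeMonoid A →* N) (ρ : Lang A → R) : Set (N × R) :=
  {p | p.2 ∈ optImprint D (η ⁻¹' {p.1}) ρ}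

/-- `S ⊆ N × R` is SF-saturated for `η` and `ρ`. -/
def SFSaturated {N R : Type} [Monoid N] [Semiring R] (η : FreeMonoid A →* N)
    (ρ : Lang A → R) (S : Set (N × R)) : Prop :=
  (∀ w : FreeMonoid A, (η w, ρ {w}) ∈ S) ∧
  (∀ t r, (t, r) ∈ S → ∀ q, q + r = r → (t, q) ∈ S) ∧
  (∀ s q t r, (s, q) ∈ S → (t, r) ∈ S → (s * t, q * r) ∈ S) ∧
  (∀ e r, (e, r) ∈ S → e * e = e → ∀ n, 1 ≤ n → r ^ n * r ^ n = r ^ n →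
    (e, r ^ n + r ^ (n + 1)) ∈ S)

/-- `L₀` is an optimal `G`-approximation for `τ` (w.r.t. the given canonical order `le`):
a language of `G` containing `ε` whose image is minimal among all such languages. -/
def OptApprox {Q : Type} (G : Set (Lang A)) (le : Q → Q → Prop) (τ : Lang A → Q)
    (L₀ : Lang A) : Prop :=
  L₀ ∈ G ∧ (1 : FreeMonoid A) ∈ L₀ ∧ ∀ L' ∈ G, (1 : FreeMonoid A) ∈ L' → le (τ L₀) (τ L')

/-- The set `X_a = {s · ρ(a) · s' | s, s' ∈ S}`. -/
def muX {R : Type} [Semiring R] (ρ : Lang A → R) (S : Set R) (a : A) : Set R :=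
  {x | ∃ s ∈ S, ∃ s' ∈ S, x = s * ρ {FreeMonoid.of a} * s'}

/-- `μ_*(a₁⋯aₙ) = X_{a₁} ⋯ X_{aₙ}` (pointwise product of sets; `μ_*(ε) = {1}`). -/
def muStar {R : Type} [Semiring R] (ρ : Lang A → R) (S : Set R) (w : FreeMonoid A) :
    Set R :=
  ((FreeMonoid.toList w).map (muX ρ S)).prod

/-- The nice multiplicative rating map `μ_{ρ,S}`. -/
def mu {R : Type} [Semiring R] (ρ : Lang A → R) (S : Set R) (K : Lang A) : Set R :=
  ⋃ w ∈ K, muStar ρ S w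

/-- `S ⊆ R` is SF-complete for `G` and `ρ`. -/
def SFComplete {R : Type} [Semiring R] (G : Set (Lang A)) (ρ : Lang A → R) (S : Set R) :
    Prop :=
  (∀ r ∈ S, ∀ q, q + r = r → q ∈ S) ∧
  (∀ q ∈ S, ∀ r ∈ S, q * r ∈ S) ∧
  (∀ L₀ : Lang A, OptApprox G (· ⊆ ·) (mu ρ S) L₀ → mu ρ S L₀ ⊆ S) ∧
  (∀ r ∈ S, ∀ n, 1 ≤ n → r ^ n * r ^ n = r ^ n → r ^ n + r ^ (n + 1) ∈ S)

end StarFreePaper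

open StarFreePaper


section Aux
open StarFreePaper
variable {A : Type}

lemma freeSplit {a b c d : FreeMonoid A} (h : a * b = c * d) :
    (∃ t, a * t = c ∧ b = t * d) ∨ (∃ t, a = c * t ∧ t * b = d) := by
  have h' : a.toList ++ b.toList = c.toList ++ d.toList := by
    simpa [FreeMonoid.toList_mul] using congrArg FreeMonoid.toList h
  rcases List.append_eq_append_iff.1 h' with ⟨t, h1, h2⟩ | ⟨t, h1, h2⟩
  · left
    refine ⟨FreeMonoid.ofList t, ?_, ?_⟩ <;>
      apply FreeMonoid.toList.injective <;>
      simp [FreeMonoid.toList_mul, h1, h2]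
  · right
    refine ⟨FreeMonoid.ofList t, ?_, ?_⟩ <;>
      apply FreeMonoid.toList.injective <;>
      simp [FreeMonoid.toList_mul, h1, h2]

lemma splitPow (u y : FreeMonoid A) :
    ∀ (n : ℕ) (t l : FreeMonoid A), t * l = u ^ n * y →
      (∃ i p q, i < n ∧ p * q = u ∧ t = u ^ i * p ∧ l = q * (u ^ (n - 1 - i) * y)) ∨
      (∃ y₁ y₂, y = y₁ * y₂ ∧ t = u ^ n * y₁ ∧ l = y₂) := by
  intro n
  induction n with
  | zero =>
    intro t l h
    right
    exact ⟨t, l, by simpa using h.symm, by simp, rfl⟩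
  | succ n ih =>
    intro t l h
    have h' : t * l = u * (u ^ n * y) := by
      rw [h, pow_succ']; simp [mul_assoc]
    rcases freeSplit h' with ⟨s, hs1, hs2⟩ | ⟨s, hs1, hs2⟩
    · left
      exact ⟨0, t, s, Nat.succ_pos n, hs1, by simp, by simpa using hs2⟩
    · rcases ih s l hs2 with ⟨i, p, q, hin, hpq, hsp, hl⟩ | ⟨y₁, y₂, hy, hs, hl⟩
      · left
        refine ⟨i + 1, p, q, by omega, hpq, ?_, ?_⟩
        · rw [hs1, hsp, pow_succ']; simp [mul_assoc]
        · have : n + 1 - 1 - (i + 1) = n - 1 - i := by omega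
          rw [this]; exact hl
      · right
        refine ⟨y₁, y₂, hy, ?_, hl⟩
        rw [hs1, hs, pow_succ']; simp [mul_assoc]

lemma split3 {x y u k l : FreeMonoid A} {n : ℕ} (h : k * l = x * u ^ n * y) :
    (∃ x₂, x = k * x₂ ∧ l = x₂ * (u ^ n * y)) ∨
    (∃ i p q, i < n ∧ p * q = u ∧ k = x * u ^ i * p ∧ l = q * (u ^ (n - 1 - i) * y)) ∨
    (∃ y₁ y₂, y = y₁ * y₂ ∧ k = x * u ^ n * y₁ ∧ l = y₂) := by
  have h' : k * l = x * (u ^ n * y) := by rw [h, mul_assoc]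
  rcases freeSplit h' with ⟨t, ht1, ht2⟩ | ⟨t, ht1, ht2⟩
  · exact Or.inl ⟨t, ht1.symm, ht2⟩
  · rcases splitPow u y n t l ht2 with ⟨i, p, q, hin, hpq, htp, hl⟩ | ⟨y₁, y₂, hy, hty, hl⟩
    · exact Or.inr (Or.inl ⟨i, p, q, hin, hpq, by rw [ht1, htp, mul_assoc], hl⟩)
    · exact Or.inr (Or.inr ⟨y₁, y₂, hy, by rw [ht1, hty, mul_assoc], hl⟩)

lemma catPiece (x u p q y : FreeMonoid A) (hu : p * q = u) {a b c : ℕ} (hc : a + b + 1 = c) :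
    (x * u ^ a * p) * (q * (u ^ b * y)) = x * u ^ c * y := by
  subst hc
  have key : u ^ a * (p * (q * u ^ b)) = u ^ (a + b + 1) := by
    rw [← mul_assoc p q, hu, ← mul_assoc, ← pow_succ, ← pow_add]
    ring_nf
  calc (x * u ^ a * p) * (q * (u ^ b * y))
      = x * (u ^ a * (p * (q * u ^ b))) * y := by simp [mul_assoc]
    _ = x * u ^ (a + b + 1) * y := by rw [key]

/-- `u` is `n`-aperiodic for `L`. -/
def ApN (L : Lang A) (u : FreeMonoid A) (n : ℕ) : Prop :=
  ∀ x y : FreeMonoid A, x * u ^ (n + 1) * y ∈ L ↔ x * u ^ n * y ∈ L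

lemma apN_mono {L : Lang A} {u : FreeMonoid A} {n : ℕ} (h : ApN L u n) :
    ∀ m, n ≤ m → ApN L u m := by
  intro m hm
  induction m, hm using Nat.le_induction with
  | base => exact h
  | succ m _ ih =>
    intro x y
    have := ih x (u * y)
    have e1 : x * u ^ (m + 1) * (u * y) = x * u ^ (m + 2) * y := by
      simp [pow_succ, mul_assoc]
    have e2 : x * u ^ m * (u * y) = x * u ^ (m + 1) * y := by
      simp [pow_succ, mul_assoc]
    rw [e1, e2] at this
    exact this

lemma apN_union {K L : Lang A} {u : FreeMonoid A} {n : ℕ}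
    (hK : ApN K u n) (hL : ApN L u n) : ApN (K ∪ L) u n := by
  intro x y
  exact or_congr (hK x y) (hL x y)

lemma apN_compl {L : Lang A} {u : FreeMonoid A} {n : ℕ} (hL : ApN L u n) : ApN Lᶜ u n := by
  intro x y
  exact not_congr (hL x y)

lemma apN_cat {K L : Lang A} {u : FreeMonoid A} {nK nL : ℕ}
    (hK : ApN K u nK) (hL : ApN L u nL) : ApN (Lcat K L) u (nK + nL + 1) := by
  set n := nK + nL + 1 with hn
  have hKm := apN_mono hK
  have hLm := apN_mono hL
  intro x y
  constructor
  · -- from exponent n+1 down to n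
    rintro ⟨k, hk, l, hl, hkl⟩
    rcases split3 hkl.symm with ⟨x₂, hx, hlv⟩ | ⟨i, p, q, hin, hpq, hkv, hlv⟩ |
      ⟨y₁, y₂, hy, hkv, hlv⟩
    · -- split inside x : l = x₂ * (u^(n+1) * y)
      have hl1 : x₂ * u ^ (n + 1) * y ∈ L := by
        rw [mul_assoc]; exact hlv ▸ hl
      have hl2 : x₂ * u ^ n * y ∈ L := (hLm n (by omega) x₂ y).mp hl1
      exact ⟨k, hk, x₂ * (u ^ n * y), by rw [← mul_assoc]; exact hl2,
        by rw [hx]; simp [mul_assoc]⟩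
    · -- split inside a u-block : i < n+1, k = x*u^i*p, l = q*(u^(n+1-1-i)*y)
      by_cases hiK : nK + 1 ≤ i
      · have hk1 : x * u ^ i * p ∈ K := hkv ▸ hk
        have hk2 : x * u ^ (i - 1) * p ∈ K := by
          have := hKm (i - 1) (by omega) x p
          rw [show i - 1 + 1 = i from by omega] at this
          exact this.mp hk1
        refine ⟨_, hk2, _, hl, ?_⟩
        rw [hlv, show n + 1 - 1 - i = n - i from by omega]
        exact (catPiece x u p q y hpq (by omega)).symm
      · have hl1 : q * u ^ (n - i) * y ∈ L := by
          rw [mul_assoc, show n - i = n + 1 - 1 - i from by omega]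
          exact hlv ▸ hl
        have hl2 : q * u ^ (n - i - 1) * y ∈ L := by
          have := hLm (n - i - 1) (by omega) q y
          rw [show n - i - 1 + 1 = n - i from by omega] at this
          exact this.mp hl1
        refine ⟨_, hkv ▸ hk, q * (u ^ (n - i - 1) * y), by rw [← mul_assoc]; exact hl2, ?_⟩
        exact (catPiece x u p q y hpq (by omega)).symm
    · -- split inside y
      have hk1 : x * u ^ (n + 1) * y₁ ∈ K := hkv ▸ hk
      have hk2 : x * u ^ n * y₁ ∈ K := (hKm n (by omega) x y₁).mp hk1
      exact ⟨_, hk2, _, hl, by rw [hy, hlv]; simp [mul_assoc]⟩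
  · -- from exponent n up to n+1
    rintro ⟨k, hk, l, hl, hkl⟩
    rcases split3 hkl.symm with ⟨x₂, hx, hlv⟩ | ⟨i, p, q, hin, hpq, hkv, hlv⟩ |
      ⟨y₁, y₂, hy, hkv, hlv⟩
    · have hl1 : x₂ * u ^ n * y ∈ L := by
        rw [mul_assoc]; exact hlv ▸ hl
      have hl2 : x₂ * u ^ (n + 1) * y ∈ L := (hLm n (by omega) x₂ y).mpr hl1
      exact ⟨k, hk, x₂ * (u ^ (n + 1) * y), by rw [← mul_assoc]; exact hl2,
        by rw [hx]; simp [mul_assoc]⟩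
    · by_cases hiK : nK ≤ i
      · have hk1 : x * u ^ i * p ∈ K := hkv ▸ hk
        have hk2 : x * u ^ (i + 1) * p ∈ K := (hKm i (by omega) x p).mpr hk1
        refine ⟨_, hk2, _, hl, ?_⟩
        rw [hlv]
        exact (catPiece x u p q y hpq (by omega)).symm
      · have hl1 : q * u ^ (n - 1 - i) * y ∈ L := by
          rw [mul_assoc]; exact hlv ▸ hl
        have hl2 : q * u ^ (n - i) * y ∈ L := by
          have := hLm (n - 1 - i) (by omega) q y
          rw [show n - 1 - i + 1 = n - i from by omega] at this
          exact this.mpr hl1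
        refine ⟨_, hkv ▸ hk, q * (u ^ (n - i) * y), by rw [← mul_assoc]; exact hl2, ?_⟩
        exact (catPiece x u p q y hpq (by omega)).symm
    · have hk1 : x * u ^ n * y₁ ∈ K := hkv ▸ hk
      have hk2 : x * u ^ (n + 1) * y₁ ∈ K := (hKm n (by omega) x y₁).mpr hk1
      exact ⟨_, hk2, _, hl, by rw [hy, hlv]; simp [mul_assoc]⟩



variable {C : Set (Lang A)}

/-- finite unions of singleton preimages. -/
lemma preimage_mem (hC : IsPrevariety C) {N : Type} [Monoid N] [Finite N]
    (φ : FreeMonoid A →* N) (h : ∀ x : N, φ ⁻¹' {x} ∈ C) (F : Set N) : φ ⁻¹' F ∈ C := by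
  classical
  have key : ∀ s : Finset N, φ ⁻¹' (↑s : Set N) ∈ C := by
    intro s
    induction s using Finset.induction_on with
    | empty => simpa using hC.2.1
    | @insert a s ha ih =>
      have : φ ⁻¹' (↑(insert a s) : Set N) = φ ⁻¹' {a} ∪ φ ⁻¹' ↑s := by
        rw [Finset.coe_insert, Set.insert_eq, Set.preimage_union]
      rw [this]
      exact hC.2.2.2.1 _ (h a) _ ih
  have hF : F.Finite := Set.toFinite F
  rw [← hF.coe_toFinset]
  exact key _

/-- finite intersections. -/
lemma iInter_mem (hC : IsPrevariety C) {ι : Type} [Fintype ι] (f : ι → Lang A)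
    (hf : ∀ i, f i ∈ C) : (⋂ i, f i) ∈ C := by
  classical
  have key : ∀ s : Finset ι, (⋂ i ∈ s, f i) ∈ C := by
    intro s
    induction s using Finset.induction_on with
    | empty => simpa using hC.2.2.1
    | @insert a s ha ih =>
      have : (⋂ i ∈ insert a s, f i) = f a ∩ ⋂ i ∈ s, f i := by
        simp [Set.biInter_insert]
      rw [this]
      exact hC.2.2.2.2.1 _ (hf a) _ ih
  have : (⋂ i, f i) = ⋂ i ∈ (Finset.univ : Finset ι), f i := by simp
  rw [this]
  exact key _

/-- The trivial morphism is a C-morphism. -/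
lemma punit_cmorphism (hC : IsPrevariety C) :
    IsCMorphism C (1 : FreeMonoid A →* PUnit) := by
  constructor
  · exact fun x => ⟨1, Subsingleton.elim _ _⟩
  · intro F
    by_cases h : PUnit.unit ∈ F
    · have : (1 : FreeMonoid A →* PUnit) ⁻¹' F = Set.univ := by
        ext w; simpa using h
      rw [this]; exact hC.2.2.1
    · have : (1 : FreeMonoid A →* PUnit) ⁻¹' F = ∅ := by
        ext w; simpa using h
      rw [this]; exact hC.2.1

/-- Binary product of C-morphisms. -/
lemma binProd (hC : IsPrevariety C) {N₁ N₂ : Type} [Monoid N₁] [Finite N₁]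
    [Monoid N₂] [Finite N₂] {φ₁ : FreeMonoid A →* N₁} {φ₂ : FreeMonoid A →* N₂}
    (h₁ : IsCMorphism C φ₁) (h₂ : IsCMorphism C φ₂) :
    ∃ (N : Type) (_ : Monoid N) (_ : Finite N) (φ : FreeMonoid A →* N),
      IsCMorphism C φ ∧ ∀ u : FreeMonoid A, φ u * φ u = φ u →
        (φ₁ u * φ₁ u = φ₁ u ∧ φ₂ u * φ₂ u = φ₂ u) := by
  refine ⟨↥(MonoidHom.mrange (φ₁.prod φ₂)), inferInstance, inferInstance,
    (φ₁.prod φ₂).mrangeRestrict, ⟨(φ₁.prod φ₂).mrangeRestrict_surjective, ?_⟩, ?_⟩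
  · intro F
    apply preimage_mem hC _ _ F
    intro x
    have : (φ₁.prod φ₂).mrangeRestrict ⁻¹' {x} = φ₁ ⁻¹' {(x : N₁ × N₂).1} ∩ φ₂ ⁻¹' {(x : N₁ × N₂).2} := by
      ext w
      simp only [Set.mem_preimage, Set.mem_singleton_iff, Set.mem_inter_iff]
      constructor
      · intro h; rw [← h]; exact ⟨rfl, rfl⟩
      · rintro ⟨ha, hb⟩
        apply Subtype.ext
        simp [MonoidHom.coe_mrangeRestrict, MonoidHom.prod_apply, Prod.ext_iff, ha, hb]
    rw [this]
    exact hC.2.2.2.2.1 _ (h₁.2 _) _ (h₂.2 _)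
  · intro u hu
    have := congrArg Subtype.val hu
    simp only [Submonoid.coe_mul, MonoidHom.coe_mrangeRestrict, MonoidHom.prod_apply,
      Prod.mk_mul_mk, Prod.mk.injEq] at this
    exact ⟨this.1, this.2⟩

end Aux

section Aux2
open StarFreePaper
variable {A : Type} {C : Set (Lang A)}

lemma syn_finite {L : Lang A} (hreg : StarFreePaper.IsRegular L) : Finite (SynMon L) := by
  obtain ⟨r, F, hF⟩ := hreg
  have key : ∀ v w : FreeMonoid A, r.φ v = r.φ w → SynMorphism L v = SynMorphism L w := by
    intro v w h
    have : SynCon L v w := by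
      intro x y
      rw [hF]
      simp only [Set.mem_preimage, map_mul, h]
    exact (SynCon L).eq.mpr this
  classical
  let g : r.M → SynMon L := fun m =>
    if h : ∃ w : FreeMonoid A, r.φ w = m then SynMorphism L h.choose else 1
  have hsurj : Function.Surjective g := by
    intro q
    obtain ⟨w, rfl⟩ := Con.mk'_surjective q
    refine ⟨r.φ w, ?_⟩
    have hex : ∃ v : FreeMonoid A, r.φ v = r.φ w := ⟨w, rfl⟩
    simp only [g, dif_pos hex]
    exact key _ _ hex.choose_spec
  exact Finite.of_surjective g hsurj

lemma syn_cmorphism (hC : IsPrevariety C) {L : Lang A} (hL : L ∈ C) :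
    IsCMorphism C (SynMorphism L) := by
  classical
  have hreg : StarFreePaper.IsRegular L := hC.1 L hL
  obtain ⟨r, F, hF⟩ := hreg
  have : Finite (SynMon L) := syn_finite (hC.1 L hL)
  refine ⟨Con.mk'_surjective, ?_⟩
  intro G
  apply preimage_mem hC _ _ G
  intro q
  obtain ⟨w, rfl⟩ := Con.mk'_surjective q
  -- the class of w
  set B : FreeMonoid A → FreeMonoid A → Lang A := fun x y =>
    if x * w * y ∈ L then LeftQuot x (RightQuot y L) else (LeftQuot x (RightQuot y L))ᶜ
    with hB
  have memB : ∀ v x y, v ∈ B x y ↔ (x * v * y ∈ L ↔ x * w * y ∈ L) := by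
    intro v x y
    have hq : v ∈ LeftQuot x (RightQuot y L) ↔ x * v * y ∈ L := by
      simp only [LeftQuot, RightQuot, Set.mem_setOf_eq, mul_assoc]
    rw [hB]
    by_cases h : x * w * y ∈ L <;> simp [h, hq]
  have hBC : ∀ x y, B x y ∈ C := by
    intro x y
    have h1 : LeftQuot x (RightQuot y L) ∈ C :=
      hC.2.2.2.2.2.2.1 _ (hC.2.2.2.2.2.2.2 L hL y) x
    rw [hB]
    by_cases h : x * w * y ∈ L <;> simp only [h, if_true, if_false]
    · exact h1
    · exact hC.2.2.2.2.2.1 _ h1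
  have hBfac : ∀ v x y x' y', r.φ x = r.φ x' → r.φ y = r.φ y' →
      (v ∈ B x y ↔ v ∈ B x' y') := by
    intro v x y x' y' hx hy
    have mem : ∀ z : FreeMonoid A, x * z * y ∈ L ↔ x' * z * y' ∈ L := by
      intro z
      rw [hF]
      simp only [Set.mem_preimage, map_mul, hx, hy]
    rw [memB, memB, mem v, mem w]
  set B' : r.M × r.M → Lang A := fun p =>
    {v | ∀ x y, r.φ x = p.1 → r.φ y = p.2 → v ∈ B x y} with hB'
  have hB'C : ∀ p, B' p ∈ C := by
    intro p
    by_cases hp : ∃ x y, r.φ x = p.1 ∧ r.φ y = p.2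
    · obtain ⟨x₀, y₀, hx₀, hy₀⟩ := hp
      have : B' p = B x₀ y₀ := by
        ext v
        constructor
        · intro hv; exact hv x₀ y₀ hx₀ hy₀
        · intro hv x y hx hy
          exact (hBfac v x y x₀ y₀ (hx.trans hx₀.symm) (hy.trans hy₀.symm)).mpr hv
      rw [this]; exact hBC x₀ y₀
    · have : B' p = Set.univ := by
        ext v
        simp only [hB', Set.mem_setOf_eq, Set.mem_univ, iff_true]
        intro x y hx hy
        exact absurd ⟨x, y, hx, hy⟩ hp
      rw [this]; exact hC.2.2.1
  have : Fintype (r.M × r.M) := Fintype.ofFinite _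
  have hcls : (SynMorphism L) ⁻¹' {(SynMorphism L) w} = ⋂ p, B' p := by
    ext v
    simp only [Set.mem_preimage, Set.mem_singleton_iff, Set.mem_iInter]
    constructor
    · intro hv p x y hx hy
      have hcon : SynCon L v w := (SynCon L).eq.mp hv
      exact (memB v x y).mpr (hcon x y)
    · intro hv
      apply (SynCon L).eq.mpr
      intro x y
      exact (memB v x y).mp (hv (r.φ x, r.φ y) x y rfl rfl)
  rw [show ({(SynCon L).mk' w} : Set (SynMon L)) = {(SynMorphism L) w} from rfl, hcls]
  exact iInter_mem hC _ hB'C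

lemma syn_apn {L : Lang A} {u : FreeMonoid A}
    (hu : SynMorphism L u * SynMorphism L u = SynMorphism L u) : ApN L u 1 := by
  have : SynMorphism L (u * u) = SynMorphism L u := by
    rw [map_mul]; exact hu
  have hcon : SynCon L (u * u) u := (SynCon L).eq.mp this
  intro x y
  have := hcon x y
  rw [show u ^ (1 + 1) = u * u from by rw [pow_two], pow_one]
  exact this

end Aux2

section Aux3
open StarFreePaper
variable {A : Type} {C : Set (Lang A)}

lemma len_pow (u : FreeMonoid A) (n : ℕ) :
    (u ^ n).toList.length = n * u.toList.length := by
  induction n with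
  | zero => simp [FreeMonoid.toList_one]
  | succ n ih => rw [pow_succ, FreeMonoid.toList_mul]; simp [ih]; ring

lemma letter_apn (a : A) (u : FreeMonoid A) : ApN ({FreeMonoid.of a} : Lang A) u 2 := by
  intro x y
  by_cases hu1 : u = 1
  · subst hu1; simp
  · have hlen : 1 ≤ u.toList.length := by
      rcases Nat.eq_zero_or_pos u.toList.length with h | h
      · exact absurd (FreeMonoid.toList.injective (by
          rw [List.length_eq_zero_iff] at h
          rw [h, FreeMonoid.toList_one])) hu1
      · exact h
    have key : ∀ k : ℕ, 2 ≤ k → x * u ^ k * y ∉ ({FreeMonoid.of a} : Lang A) := by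
      intro k hk hmem
      rw [Set.mem_singleton_iff] at hmem
      have := congrArg (fun w : FreeMonoid A => w.toList.length) hmem
      simp only [FreeMonoid.toList_mul, List.length_append, len_pow,
        FreeMonoid.toList_of, List.length_singleton] at this
      nlinarith
    simp only [key 3 (by omega), key 2 (by omega)]

lemma sf_good (hC : IsPrevariety C) {L : Lang A} (h : SF C L) :
    ∃ (N : Type) (_ : Monoid N) (_ : Finite N) (φ : FreeMonoid A →* N),
      IsCMorphism C φ ∧ ∀ u : FreeMonoid A, φ u * φ u = φ u →
        ∃ n, 1 ≤ n ∧ ApN L u n := by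
  induction h with
  | @base L hL =>
    have hfin : Finite (SynMon L) := syn_finite (hC.1 L hL)
    exact ⟨SynMon L, inferInstance, hfin, SynMorphism L, syn_cmorphism hC hL,
      fun u hu => ⟨1, le_refl 1, syn_apn hu⟩⟩
  | letter a =>
    exact ⟨PUnit, inferInstance, inferInstance, 1, punit_cmorphism hC,
      fun u _ => ⟨2, by omega, letter_apn a u⟩⟩
  | @union K L hK hL ihK ihL =>
    obtain ⟨N₁, i₁, f₁, φ₁, hφ₁, hap₁⟩ := ihK
    obtain ⟨N₂, i₂, f₂, φ₂, hφ₂, hap₂⟩ := ihL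
    obtain ⟨N, iN, fN, φ, hφ, htr⟩ := binProd hC hφ₁ hφ₂
    refine ⟨N, iN, fN, φ, hφ, ?_⟩
    intro u hu
    obtain ⟨h1, h2⟩ := htr u hu
    obtain ⟨n₁, hn₁, ha₁⟩ := hap₁ u h1
    obtain ⟨n₂, hn₂, ha₂⟩ := hap₂ u h2
    exact ⟨max n₁ n₂, by omega,
      apN_union (apN_mono ha₁ _ (le_max_left _ _)) (apN_mono ha₂ _ (le_max_right _ _))⟩
  | @compl L hL ihL =>
    obtain ⟨N, iN, fN, φ, hφ, hap⟩ := ihL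
    refine ⟨N, iN, fN, φ, hφ, ?_⟩
    intro u hu
    obtain ⟨n, hn, ha⟩ := hap u hu
    exact ⟨n, hn, apN_compl ha⟩
  | @cat K L hK hL ihK ihL =>
    obtain ⟨N₁, i₁, f₁, φ₁, hφ₁, hap₁⟩ := ihK
    obtain ⟨N₂, i₂, f₂, φ₂, hφ₂, hap₂⟩ := ihL
    obtain ⟨N, iN, fN, φ, hφ, htr⟩ := binProd hC hφ₁ hφ₂
    refine ⟨N, iN, fN, φ, hφ, ?_⟩
    intro u hu
    obtain ⟨h1, h2⟩ := htr u hu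
    obtain ⟨n₁, hn₁, ha₁⟩ := hap₁ u h1
    obtain ⟨n₂, hn₂, ha₂⟩ := hap₂ u h2
    exact ⟨n₁ + n₂ + 1, by omega, apN_cat ha₁ ha₂⟩

lemma family (hC : IsPrevariety C) {ι : Type} [Fintype ι] (Ls : ι → Lang A)
    (h : ∀ s : ι, ∃ (N : Type) (_ : Monoid N) (_ : Finite N) (φ : FreeMonoid A →* N),
      IsCMorphism C φ ∧ ∀ u : FreeMonoid A, φ u * φ u = φ u →
        ∃ n, 1 ≤ n ∧ ApN (Ls s) u n) :
    ∃ (N : Type) (_ : Monoid N) (_ : Finite N) (φ : FreeMonoid A →* N),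
      IsCMorphism C φ ∧ ∀ u : FreeMonoid A, φ u * φ u = φ u →
        ∀ s : ι, ∃ n, 1 ≤ n ∧ ApN (Ls s) u n := by
  classical
  have key : ∀ T : Finset ι,
      ∃ (N : Type) (_ : Monoid N) (_ : Finite N) (φ : FreeMonoid A →* N),
        IsCMorphism C φ ∧ ∀ u : FreeMonoid A, φ u * φ u = φ u →
          ∀ s ∈ T, ∃ n, 1 ≤ n ∧ ApN (Ls s) u n := by
    intro T
    induction T using Finset.induction_on with
    | empty =>
      exact ⟨PUnit, inferInstance, inferInstance, 1, punit_cmorphism hC,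
        fun u _ s hs => absurd hs (by simp)⟩
    | @insert a T ha ih =>
      obtain ⟨N₁, i₁, f₁, φ₁, hφ₁, hap₁⟩ := h a
      obtain ⟨N₂, i₂, f₂, φ₂, hφ₂, hap₂⟩ := ih
      obtain ⟨N, iN, fN, φ, hφ, htr⟩ := binProd hC hφ₁ hφ₂
      refine ⟨N, iN, fN, φ, hφ, ?_⟩
      intro u hu s hs
      obtain ⟨h1, h2⟩ := htr u hu
      rcases Finset.mem_insert.mp hs with rfl | hs
      · exact hap₁ u h1
      · exact hap₂ u h2 s hs
  obtain ⟨N, iN, fN, φ, hφ, hap⟩ := key Finset.univ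
  exact ⟨N, iN, fN, φ, hφ, fun u hu s => hap u hu s (Finset.mem_univ s)⟩

end Aux3

/-- If `α` is an `SF(C)`-morphism, there is a `C`-morphism `η` such that
whenever `η(u)` is idempotent, `α(u)^(n+1) = α(u)^n` for some `n ≥ 1`. -/
theorem statement6 {A : Type} [Fintype A] (C : Set (Lang A)) (hC : IsPrevariety C)
    {M : Type} [Monoid M] [Finite M] (α : FreeMonoid A →* M)
    (hα : IsCMorphism {L : Lang A | SF C L} α) :
    ∃ r : FinMonRec A, IsCMorphism C r.φ ∧
      ∀ u : FreeMonoid A, r.φ u * r.φ u = r.φ u →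
        ∃ n, 1 ≤ n ∧ α u ^ (n + 1) = α u ^ n := by
  classical
  have : Fintype M := Fintype.ofFinite M
  have hsf : ∀ s : M, SF C (α ⁻¹' {s}) := fun s => hα.2 {s}
  obtain ⟨N, iN, fN, φ, hφ, hap⟩ :=
    family hC (fun s : M => α ⁻¹' {s}) (fun s => sf_good hC (hsf s))
  refine ⟨@FinMonRec.mk A N iN fN φ, hφ, ?_⟩
  intro u hu
  have hap' := hap u hu
  choose g hg1 hg2 using hap'
  set n := Finset.univ.sup g + 1 with hn
  have hns : ∀ s : M, g s ≤ n := by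
    intro s
    have := Finset.le_sup (Finset.mem_univ s) (f := g)
    omega
  have key : ApN (α ⁻¹' {α u ^ n}) u n :=
    apN_mono (hg2 (α u ^ n)) n (hns _)
  have h1 := key 1 1
  simp only [one_mul, mul_one, Set.mem_preimage, Set.mem_singleton_iff, map_pow] at h1
  refine ⟨n, by omega, ?_⟩
  exact h1.mpr trivial
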